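/- Let f : A → B be a homomorphism of dg-algebras inducing an isomorphism on cohomology. Then the induced map on homotopy classes of twisting sequences ts(A) → ts(B) is a bijection. -/

import Mathlib

/-- A differential graded algebra over `ℤ`. -/
structure DGA where
  A : Type
  [ringA : Ring A]
  grading : ℤ → AddSubgroup A
  mul_mem : ∀ {m n : ℤ} {a b : A}, a ∈ grading m → b ∈ grading n → a * b ∈ grading (m + n)
  d : A →+ A
  d_sq : ∀ a : A, d (d a) = 0
  d_mem : ∀ {m : ℤ} {a : A}, a ∈ grading m → d a ∈ grading (m + 1)
  leibniz : ∀ {m : ℤ} {a : A}, a ∈ grading m → ∀ b : A,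
      d (a * b) = d a * b + (((-1 : ℤˣ) ^ m : ℤˣ) : ℤ) • (a * d b)

attribute [instance] DGA.ringA

/-- A twisting sequence: `x n` is `x_{2n+1}` for `n ≥ 1`. -/
def IsTwistingSeq (G : DGA) (x : ℕ → G.A) : Prop :=
  x 0 = 0 ∧ (∀ n : ℕ, x n ∈ G.grading (2 * (n : ℤ) + 1)) ∧
    ∀ n : ℕ, 1 ≤ n →
      G.d (x n) + ∑ i ∈ Finset.Ioo 0 n, x i * x (n - i) = 0

/-- A homotopy `h_•` from the twisting sequence `x_•` to the twisting sequence `y_•`. -/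
def IsHomotopy (G : DGA) (x y h : ℕ → G.A) : Prop :=
  h 0 = 0 ∧ (∀ n : ℕ, h n ∈ G.grading (2 * (n : ℤ))) ∧
    ∀ n : ℕ, 1 ≤ n →
      y n - x n + G.d (h n) +
        ∑ i ∈ Finset.Ioo 0 n, (y (n - i) * h i - h i * x (n - i)) = 0

/-- Two twisting sequences are homotopic if there is a homotopy between them. -/
def Homotopic (G : DGA) (x y : ℕ → G.A) : Prop :=
  ∃ h : ℕ → G.A, IsHomotopy G x y h

open Finset

lemma DGA.mem_of_eq (D : DGA) {s t : ℤ} (h : s = t) {a : D.A} (ha : a ∈ D.grading s) :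
    a ∈ D.grading t := h ▸ ha

lemma DGA.mul_mem' (D : DGA) {s t u : ℤ} {a b : D.A} (ha : a ∈ D.grading s)
    (hb : b ∈ D.grading t) (h : s + t = u) : a * b ∈ D.grading u := h ▸ D.mul_mem ha hb

lemma DGA.d_mul_odd (D : DGA) {k : ℤ} {a : D.A} (ha : a ∈ D.grading (2 * k + 1)) (b : D.A) :
    D.d (a * b) = D.d a * b - a * D.d b := by
  have h := D.leibniz ha b
  have hu : ((-1 : ℤˣ) ^ (2 * k + 1) : ℤˣ) = -1 := by
    rw [zpow_add, zpow_mul, zpow_one, zpow_two]; norm_num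
  rw [hu] at h
  simpa [sub_eq_add_neg] using h

lemma DGA.d_mul_even (D : DGA) {k : ℤ} {a : D.A} (ha : a ∈ D.grading (2 * k)) (b : D.A) :
    D.d (a * b) = D.d a * b + a * D.d b := by
  have h := D.leibniz ha b
  have hu : ((-1 : ℤˣ) ^ (2 * k) : ℤˣ) = 1 := by
    rw [zpow_mul, zpow_two]; norm_num
  rw [hu] at h
  simpa using h

lemma shuffle {M : Type*} [AddCommGroup M] {a b c s : M} (H : a - b + c + s = 0) :
    c = b - a - s := by
  have h1 : (a - b + c) = -s := eq_neg_of_add_eq_zero_left H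
  have h2 : c = -s - (a - b) := eq_sub_of_add_eq' h1
  rw [h2]; abel

lemma conv3 {M : Type*} [AddCommMonoid M] (F : ℕ → ℕ → ℕ → M) (n : ℕ) :
    ∑ i ∈ Ioo 0 n, ∑ j ∈ Ioo 0 i, F j (i - j) (n - i)
      = ∑ i ∈ Ioo 0 n, ∑ j ∈ Ioo 0 (n - i), F i j (n - i - j) := by
  rw [Finset.sum_sigma', Finset.sum_sigma']
  refine Finset.sum_nbij' (fun p => ⟨p.2, p.1 - p.2⟩) (fun p => ⟨p.1 + p.2, p.1⟩) ?_ ?_ ?_ ?_ ?_ <;>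
    rintro ⟨a, b⟩ h <;>
    simp only [Finset.mem_sigma, Finset.mem_Ioo] at *
  · omega
  · omega
  · have h1 : b + (a - b) = a := by omega
    simp [h1]
  · have h1 : a + b - a = b := by omega
    simp [h1]
  · have h1 : n - b - (a - b) = n - a := by omega
    simp [h1]

lemma reflect {M : Type*} [AddCommMonoid M] (F : ℕ → ℕ → M) (n : ℕ) :
    ∑ i ∈ Ioo 0 n, F i (n - i) = ∑ i ∈ Ioo 0 n, F (n - i) i := by
  refine Finset.sum_nbij' (fun i => n - i) (fun i => n - i) ?_ ?_ ?_ ?_ ?_ <;>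
    intro a ha <;> simp only [Finset.mem_Ioo] at * <;> try omega
  have h : n - (n - a) = a := by omega
  rw [h]

/-- L1 : the quadratic obstruction is a cocycle. -/
lemma d_obstruction (D : DGA) (x : ℕ → D.A) (n : ℕ)
    (hdeg : ∀ i, i < n → x i ∈ D.grading (2 * (i : ℤ) + 1))
    (hx : ∀ m, 1 ≤ m → m < n → D.d (x m) + ∑ i ∈ Ioo 0 m, x i * x (m - i) = 0) :
    D.d (∑ i ∈ Ioo 0 n, x i * x (n - i)) = 0 := by
  rw [map_sum]
  have key : ∀ i ∈ Ioo 0 n, D.d (x i * x (n - i))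
      = -(∑ j ∈ Ioo 0 i, x j * (x (i - j) * x (n - i)))
        + ∑ j ∈ Ioo 0 (n - i), x i * (x j * x (n - i - j)) := by
    intro i hi
    rw [Finset.mem_Ioo] at hi
    have h1 : D.d (x i) = -∑ j ∈ Ioo 0 i, x j * x (i - j) :=
      eq_neg_of_add_eq_zero_left (hx i hi.1 hi.2)
    have h2 : D.d (x (n - i)) = -∑ j ∈ Ioo 0 (n - i), x j * x (n - i - j) :=
      eq_neg_of_add_eq_zero_left (hx (n - i) (by omega) (by omega))
    rw [D.d_mul_odd (hdeg i hi.2), h1, h2]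
    simp only [neg_mul, mul_neg, Finset.sum_mul, Finset.mul_sum, sub_neg_eq_add, mul_assoc]
  rw [Finset.sum_congr rfl key, Finset.sum_add_distrib]
  have hc := conv3 (fun a b c => x a * (x b * x c)) n
  rw [Finset.sum_neg_distrib, hc]
  exact neg_add_cancel _


/-- L2: differential of the homotopy-correction sum. -/
lemma d_Q (D : DGA) (y X h : ℕ → D.A) (n : ℕ)
    (hydeg : ∀ i, i < n → y i ∈ D.grading (2 * (i : ℤ) + 1))
    (hXdeg : ∀ i, i < n → X i ∈ D.grading (2 * (i : ℤ) + 1))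
    (hhdeg : ∀ i, i < n → h i ∈ D.grading (2 * (i : ℤ)))
    (hy : ∀ m, 1 ≤ m → m < n → D.d (y m) + ∑ i ∈ Ioo 0 m, y i * y (m - i) = 0)
    (hX : ∀ m, 1 ≤ m → m < n → D.d (X m) + ∑ i ∈ Ioo 0 m, X i * X (m - i) = 0)
    (hh : ∀ m, 1 ≤ m → m < n →
      y m - X m + D.d (h m) + ∑ i ∈ Ioo 0 m, (y (m - i) * h i - h i * X (m - i)) = 0) :
    D.d (∑ i ∈ Ioo 0 n, (y (n - i) * h i - h i * X (n - i)))
      = (∑ i ∈ Ioo 0 n, y i * y (n - i)) - ∑ i ∈ Ioo 0 n, X i * X (n - i) := by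
  rw [map_sum]
  have key : ∀ i ∈ Ioo 0 n, D.d (y (n - i) * h i - h i * X (n - i))
      = -(∑ j ∈ Ioo 0 (n - i), y j * (y (n - i - j) * h i))
        + y (n - i) * y i
        - y (n - i) * X i
        + (∑ j ∈ Ioo 0 i, y (n - i) * (y (i - j) * h j))
        - (∑ j ∈ Ioo 0 i, y (n - i) * (h j * X (i - j)))
        + y i * X (n - i)
        - X i * X (n - i)
        + (∑ j ∈ Ioo 0 i, y (i - j) * (h j * X (n - i)))
        - (∑ j ∈ Ioo 0 i, h j * (X (i - j) * X (n - i)))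
        + ∑ j ∈ Ioo 0 (n - i), h i * (X j * X (n - i - j)) := by
    intro i hi
    rw [Finset.mem_Ioo] at hi
    have hdy : D.d (y (n - i)) = -∑ j ∈ Ioo 0 (n - i), y j * y (n - i - j) :=
      eq_neg_of_add_eq_zero_left (hy (n - i) (by omega) (by omega))
    have hdX : D.d (X (n - i)) = -∑ j ∈ Ioo 0 (n - i), X j * X (n - i - j) :=
      eq_neg_of_add_eq_zero_left (hX (n - i) (by omega) (by omega))
    have hdh : D.d (h i)
        = X i - y i - ∑ j ∈ Ioo 0 i, (y (i - j) * h j - h j * X (i - j)) :=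
      shuffle (hh i hi.1 hi.2)
    rw [map_sub, D.d_mul_odd (hydeg (n - i) (by omega)), D.d_mul_even (hhdeg i hi.2),
      hdy, hdX, hdh]
    simp only [neg_mul, mul_neg, sub_mul, mul_sub, Finset.sum_mul, Finset.mul_sum,
      Finset.sum_sub_distrib, mul_assoc]
    abel
  rw [Finset.sum_congr rfl key]
  simp only [Finset.sum_add_distrib, Finset.sum_sub_distrib, Finset.sum_neg_distrib]
  have hB : ∑ i ∈ Ioo 0 n, y (n - i) * y i = ∑ i ∈ Ioo 0 n, y i * y (n - i) := by
    have t := reflect (fun a b => y b * y a) n; exact t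
  have hC : ∑ i ∈ Ioo 0 n, y (n - i) * X i = ∑ i ∈ Ioo 0 n, y i * X (n - i) := by
    have t := reflect (fun a b => y b * X a) n; exact t
  have hD : ∑ i ∈ Ioo 0 n, ∑ j ∈ Ioo 0 i, y (n - i) * (y (i - j) * h j)
      = ∑ i ∈ Ioo 0 n, ∑ j ∈ Ioo 0 (n - i), y j * (y (n - i - j) * h i) := by
    have t1 := conv3 (fun a b m => y m * (y b * h a)) n
    rw [t1]
    refine Finset.sum_congr rfl fun i _ => ?_
    have t2 := reflect (fun a b => y b * (y a * h i)) (n - i)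
    exact t2
  have hE : ∑ i ∈ Ioo 0 n, ∑ j ∈ Ioo 0 i, y (n - i) * (h j * X (i - j))
      = ∑ i ∈ Ioo 0 n, ∑ j ∈ Ioo 0 (n - i), y (n - i - j) * (h i * X j) := by
    have t1 := conv3 (fun a b m => y m * (h a * X b)) n
    exact t1
  have hH : ∑ i ∈ Ioo 0 n, ∑ j ∈ Ioo 0 i, y (i - j) * (h j * X (n - i))
      = ∑ i ∈ Ioo 0 n, ∑ j ∈ Ioo 0 (n - i), y (n - i - j) * (h i * X j) := by
    have t1 := conv3 (fun a b m => y b * (h a * X m)) n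
    rw [t1]
    refine Finset.sum_congr rfl fun i _ => ?_
    have t2 := reflect (fun a b => y a * (h i * X b)) (n - i)
    exact t2
  have hI : ∑ i ∈ Ioo 0 n, ∑ j ∈ Ioo 0 i, h j * (X (i - j) * X (n - i))
      = ∑ i ∈ Ioo 0 n, ∑ j ∈ Ioo 0 (n - i), h i * (X j * X (n - i - j)) := by
    have t1 := conv3 (fun a b m => h a * (X b * X m)) n
    exact t1
  rw [hB, hC, hD, hE, hH, hI]
  abel

/-- L3: differential of the homotopy obstruction. -/
lemma d_hobstruction (D : DGA) (x x' g : ℕ → D.A) (n : ℕ) (hn : 1 ≤ n)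
    (hxdeg : ∀ i, i < n → x i ∈ D.grading (2 * (i : ℤ) + 1))
    (hx'deg : ∀ i, i < n → x' i ∈ D.grading (2 * (i : ℤ) + 1))
    (hgdeg : ∀ i, i < n → g i ∈ D.grading (2 * (i : ℤ)))
    (hx : ∀ m, 1 ≤ m → m ≤ n → D.d (x m) + ∑ i ∈ Ioo 0 m, x i * x (m - i) = 0)
    (hx' : ∀ m, 1 ≤ m → m ≤ n → D.d (x' m) + ∑ i ∈ Ioo 0 m, x' i * x' (m - i) = 0)
    (hg : ∀ m, 1 ≤ m → m < n →
      x' m - x m + D.d (g m) + ∑ i ∈ Ioo 0 m, (x' (m - i) * g i - g i * x (m - i)) = 0) :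
    D.d (x' n - x n + ∑ i ∈ Ioo 0 n, (x' (n - i) * g i - g i * x (n - i))) = 0 := by
  have hdxn : D.d (x n) = -∑ i ∈ Ioo 0 n, x i * x (n - i) :=
    eq_neg_of_add_eq_zero_left (hx n hn le_rfl)
  have hdx'n : D.d (x' n) = -∑ i ∈ Ioo 0 n, x' i * x' (n - i) :=
    eq_neg_of_add_eq_zero_left (hx' n hn le_rfl)
  rw [map_add, map_sub, map_sum, hdxn, hdx'n]
  have key : ∀ i ∈ Ioo 0 n, D.d (x' (n - i) * g i - g i * x (n - i))
      = -(∑ j ∈ Ioo 0 (n - i), x' j * (x' (n - i - j) * g i))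
        - x' (n - i) * x i
        + x' (n - i) * x' i
        + (∑ j ∈ Ioo 0 i, x' (n - i) * (x' (i - j) * g j))
        - (∑ j ∈ Ioo 0 i, x' (n - i) * (g j * x (i - j)))
        - x i * x (n - i)
        + x' i * x (n - i)
        + (∑ j ∈ Ioo 0 i, x' (i - j) * (g j * x (n - i)))
        - (∑ j ∈ Ioo 0 i, g j * (x (i - j) * x (n - i)))
        + ∑ j ∈ Ioo 0 (n - i), g i * (x j * x (n - i - j)) := by
    intro i hi
    rw [Finset.mem_Ioo] at hi
    have hdx : D.d (x (n - i)) = -∑ j ∈ Ioo 0 (n - i), x j * x (n - i - j) :=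
      eq_neg_of_add_eq_zero_left (hx (n - i) (by omega) (by omega))
    have hdx' : D.d (x' (n - i)) = -∑ j ∈ Ioo 0 (n - i), x' j * x' (n - i - j) :=
      eq_neg_of_add_eq_zero_left (hx' (n - i) (by omega) (by omega))
    have hdg : D.d (g i)
        = x i - x' i - ∑ j ∈ Ioo 0 i, (x' (i - j) * g j - g j * x (i - j)) :=
      shuffle (hg i hi.1 hi.2)
    rw [map_sub, D.d_mul_odd (hx'deg (n - i) (by omega)), D.d_mul_even (hgdeg i hi.2),
      hdx, hdx', hdg]
    simp only [neg_mul, mul_neg, sub_mul, mul_sub, Finset.sum_mul, Finset.mul_sum,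
      Finset.sum_sub_distrib, mul_assoc]
    abel
  rw [Finset.sum_congr rfl key]
  simp only [Finset.sum_add_distrib, Finset.sum_sub_distrib, Finset.sum_neg_distrib]
  have h1 : ∑ i ∈ Ioo 0 n, x' (n - i) * x' i = ∑ i ∈ Ioo 0 n, x' i * x' (n - i) := by
    have t := reflect (fun a b => x' b * x' a) n; exact t
  have h2 : ∑ i ∈ Ioo 0 n, x' (n - i) * x i = ∑ i ∈ Ioo 0 n, x' i * x (n - i) := by
    have t := reflect (fun a b => x' b * x a) n; exact t
  have h3 : ∑ i ∈ Ioo 0 n, ∑ j ∈ Ioo 0 i, x' (n - i) * (x' (i - j) * g j)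
      = ∑ i ∈ Ioo 0 n, ∑ j ∈ Ioo 0 (n - i), x' j * (x' (n - i - j) * g i) := by
    have t1 := conv3 (fun a b m => x' m * (x' b * g a)) n
    rw [t1]
    refine Finset.sum_congr rfl fun i _ => ?_
    have t2 := reflect (fun a b => x' b * (x' a * g i)) (n - i)
    exact t2
  have h4 : ∑ i ∈ Ioo 0 n, ∑ j ∈ Ioo 0 i, x' (n - i) * (g j * x (i - j))
      = ∑ i ∈ Ioo 0 n, ∑ j ∈ Ioo 0 (n - i), x' (n - i - j) * (g i * x j) := by
    have t1 := conv3 (fun a b m => x' m * (g a * x b)) n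
    exact t1
  have h5 : ∑ i ∈ Ioo 0 n, ∑ j ∈ Ioo 0 i, x' (i - j) * (g j * x (n - i))
      = ∑ i ∈ Ioo 0 n, ∑ j ∈ Ioo 0 (n - i), x' (n - i - j) * (g i * x j) := by
    have t1 := conv3 (fun a b m => x' b * (g a * x m)) n
    rw [t1]
    refine Finset.sum_congr rfl fun i _ => ?_
    have t2 := reflect (fun a b => x' a * (g i * x b)) (n - i)
    exact t2
  have h6 : ∑ i ∈ Ioo 0 n, ∑ j ∈ Ioo 0 i, g j * (x (i - j) * x (n - i))
      = ∑ i ∈ Ioo 0 n, ∑ j ∈ Ioo 0 (n - i), g i * (x j * x (n - i - j)) := by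
    have t1 := conv3 (fun a b m => g a * (x b * x m)) n
    exact t1
  rw [h1, h2, h3, h4, h5, h6]
  abel

/-- L4: differential of the secondary correction sum. -/
lemma d_W (D : DGA) (X X' c e : ℕ → D.A) (n : ℕ)
    (hXdeg : ∀ i, i < n → X i ∈ D.grading (2 * (i : ℤ) + 1))
    (hX'deg : ∀ i, i < n → X' i ∈ D.grading (2 * (i : ℤ) + 1))
    (hcdeg : ∀ i, 1 ≤ i → i < n → c i ∈ D.grading (2 * (i : ℤ) - 1))
    (hX : ∀ m, 1 ≤ m → m < n → D.d (X m) + ∑ i ∈ Ioo 0 m, X i * X (m - i) = 0)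
    (hX' : ∀ m, 1 ≤ m → m < n → D.d (X' m) + ∑ i ∈ Ioo 0 m, X' i * X' (m - i) = 0)
    (hce : ∀ m, 1 ≤ m → m < n →
      e m = D.d (c m) + ∑ j ∈ Ioo 0 m, (X' (m - j) * c j + c j * X (m - j))) :
    D.d (∑ i ∈ Ioo 0 n, (X' (n - i) * c i + c i * X (n - i)))
      = -∑ i ∈ Ioo 0 n, (X' (n - i) * e i - e i * X (n - i)) := by
  rw [map_sum]
  have key : ∀ i ∈ Ioo 0 n, D.d (X' (n - i) * c i + c i * X (n - i))
      = -(∑ j ∈ Ioo 0 (n - i), X' j * (X' (n - i - j) * c i))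
        - X' (n - i) * e i
        + (∑ j ∈ Ioo 0 i, X' (n - i) * (X' (i - j) * c j))
        + (∑ j ∈ Ioo 0 i, X' (n - i) * (c j * X (i - j)))
        + e i * X (n - i)
        - (∑ j ∈ Ioo 0 i, X' (i - j) * (c j * X (n - i)))
        - (∑ j ∈ Ioo 0 i, c j * (X (i - j) * X (n - i)))
        + ∑ j ∈ Ioo 0 (n - i), c i * (X j * X (n - i - j)) := by
    intro i hi
    rw [Finset.mem_Ioo] at hi
    have hdX : D.d (X (n - i)) = -∑ j ∈ Ioo 0 (n - i), X j * X (n - i - j) :=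
      eq_neg_of_add_eq_zero_left (hX (n - i) (by omega) (by omega))
    have hdX' : D.d (X' (n - i)) = -∑ j ∈ Ioo 0 (n - i), X' j * X' (n - i - j) :=
      eq_neg_of_add_eq_zero_left (hX' (n - i) (by omega) (by omega))
    have hdc : D.d (c i)
        = e i - ∑ j ∈ Ioo 0 i, (X' (i - j) * c j + c j * X (i - j)) :=
      eq_sub_of_add_eq (hce i hi.1 hi.2).symm
    have hcodd : c i ∈ D.grading (2 * ((i : ℤ) - 1) + 1) :=
      D.mem_of_eq (by ring) (hcdeg i hi.1 hi.2)
    rw [map_add, D.d_mul_odd (hX'deg (n - i) (by omega)), D.d_mul_odd hcodd,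
      hdX, hdX', hdc]
    simp only [neg_mul, mul_neg, sub_mul, mul_sub, add_mul, mul_add, Finset.sum_mul,
      Finset.mul_sum, Finset.sum_sub_distrib, Finset.sum_add_distrib, mul_assoc]
    abel
  rw [Finset.sum_congr rfl key]
  simp only [Finset.sum_add_distrib, Finset.sum_sub_distrib, Finset.sum_neg_distrib]
  have h1 : ∑ i ∈ Ioo 0 n, ∑ j ∈ Ioo 0 i, X' (n - i) * (X' (i - j) * c j)
      = ∑ i ∈ Ioo 0 n, ∑ j ∈ Ioo 0 (n - i), X' j * (X' (n - i - j) * c i) := by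
    have t1 := conv3 (fun a b m => X' m * (X' b * c a)) n
    rw [t1]
    refine Finset.sum_congr rfl fun i _ => ?_
    have t2 := reflect (fun a b => X' b * (X' a * c i)) (n - i)
    exact t2
  have h2 : ∑ i ∈ Ioo 0 n, ∑ j ∈ Ioo 0 i, X' (n - i) * (c j * X (i - j))
      = ∑ i ∈ Ioo 0 n, ∑ j ∈ Ioo 0 (n - i), X' (n - i - j) * (c i * X j) := by
    have t1 := conv3 (fun a b m => X' m * (c a * X b)) n
    exact t1
  have h3 : ∑ i ∈ Ioo 0 n, ∑ j ∈ Ioo 0 i, X' (i - j) * (c j * X (n - i))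
      = ∑ i ∈ Ioo 0 n, ∑ j ∈ Ioo 0 (n - i), X' (n - i - j) * (c i * X j) := by
    have t1 := conv3 (fun a b m => X' b * (c a * X m)) n
    rw [t1]
    refine Finset.sum_congr rfl fun i _ => ?_
    have t2 := reflect (fun a b => X' a * (c i * X b)) (n - i)
    exact t2
  have h4 : ∑ i ∈ Ioo 0 n, ∑ j ∈ Ioo 0 i, c j * (X (i - j) * X (n - i))
      = ∑ i ∈ Ioo 0 n, ∑ j ∈ Ioo 0 (n - i), c i * (X j * X (n - i - j)) := by
    have t1 := conv3 (fun a b m => c a * (X b * X m)) n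
    exact t1
  rw [h1, h2, h3, h4]
  abel

section Rec

variable {α : Type}

def itseq (d0 : α) (step : ℕ → (ℕ → α) → α) : ℕ → ℕ → α
  | 0 => fun _ => d0
  | (n + 1) => fun i => if i = n then step n (itseq d0 step n) else itseq d0 step n i

def sseq (d0 : α) (step : ℕ → (ℕ → α) → α) (n : ℕ) : α := step n (itseq d0 step n)

lemma itseq_lt (d0 : α) (step : ℕ → (ℕ → α) → α) :
    ∀ n i, i < n → itseq d0 step n i = sseq d0 step i := by
  intro n
  induction n with
  | zero => intro i h; omega
  | succ n ih =>
    intro i h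
    by_cases hc : i = n
    · subst hc; simp [itseq, sseq]
    · have hlt : i < n := by omega
      simp only [itseq, if_neg hc]
      exact ih i hlt

lemma main_rec (Spec : ℕ → (ℕ → α) → α → Prop) (d0 : α)
    (hcongr : ∀ n (prev prev' : ℕ → α) p, (∀ i, i < n → prev i = prev' i) →
      Spec n prev p → Spec n prev' p)
    (hex : ∀ n (s : ℕ → α), (∀ m, m < n → Spec m s (s m)) → ∃ p, Spec n s p) :
    ∃ s : ℕ → α, ∀ n, Spec n s (s n) := by
  classical
  set step : ℕ → (ℕ → α) → α :=
    fun n prev => if h : ∃ p, Spec n prev p then h.choose else d0 with hstep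
  refine ⟨sseq d0 step, ?_⟩
  intro n
  induction n using Nat.strongRecOn with
  | ind n ih =>
    have hagree : ∀ i, i < n → itseq d0 step n i = sseq d0 step i :=
      fun i h => itseq_lt d0 step n i h
    have hE : ∃ p, Spec n (itseq d0 step n) p := by
      obtain ⟨p, hp⟩ := hex n (sseq d0 step) ih
      exact ⟨p, hcongr n (sseq d0 step) (itseq d0 step n) p
        (fun i h => (hagree i h).symm) hp⟩
    have hval : sseq d0 step n = hE.choose := by
      show (if h : ∃ p, Spec n (itseq d0 step n) p then h.choose else d0) = hE.choose
      rw [dif_pos hE]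
    refine hcongr n (itseq d0 step n) (sseq d0 step) _ hagree ?_
    rw [hval]
    exact hE.choose_spec

end Rec

lemma surj_step (G H : DGA) (f : G.A →+* H.A)
    (hf_deg : ∀ (m : ℤ) (a : G.A), a ∈ G.grading m → f a ∈ H.grading m)
    (hf_d : ∀ a : G.A, f (G.d a) = H.d (f a))
    (hsurj : ∀ (m : ℤ) (b : H.A), b ∈ H.grading m → H.d b = 0 →
      ∃ a c, a ∈ G.grading m ∧ G.d a = 0 ∧ c ∈ H.grading (m - 1) ∧ f a - b = H.d c)
    (hinj : ∀ (m : ℤ) (a : G.A), a ∈ G.grading m → G.d a = 0 →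
      (∃ c, c ∈ H.grading (m - 1) ∧ f a = H.d c) →
      ∃ c', c' ∈ G.grading (m - 1) ∧ a = G.d c')
    (y : ℕ → H.A) (hy : IsTwistingSeq H y) (n : ℕ) (hn : 1 ≤ n)
    (x : ℕ → G.A) (h : ℕ → H.A)
    (hxdeg : ∀ i, i < n → x i ∈ G.grading (2 * (i : ℤ) + 1))
    (hhdeg : ∀ i, i < n → h i ∈ H.grading (2 * (i : ℤ)))
    (hxeq : ∀ m, 1 ≤ m → m < n → G.d (x m) + ∑ i ∈ Ioo 0 m, x i * x (m - i) = 0)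
    (hheq : ∀ m, 1 ≤ m → m < n → y m - f (x m) + H.d (h m)
        + ∑ i ∈ Ioo 0 m, (y (m - i) * h i - h i * f (x (m - i))) = 0) :
    ∃ p : G.A × H.A, p.1 ∈ G.grading (2 * (n : ℤ) + 1) ∧ p.2 ∈ H.grading (2 * (n : ℤ)) ∧
      G.d p.1 + ∑ i ∈ Ioo 0 n, x i * x (n - i) = 0 ∧
      y n - f p.1 + H.d p.2
        + ∑ i ∈ Ioo 0 n, (y (n - i) * h i - h i * f (x (n - i))) = 0 := by
  obtain ⟨hy0, hydeg, hyeq⟩ := hy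
  have hXdeg : ∀ i, i < n → f (x i) ∈ H.grading (2 * (i : ℤ) + 1) :=
    fun i hi => hf_deg _ _ (hxdeg i hi)
  have hXeq : ∀ m, 1 ≤ m → m < n →
      H.d (f (x m)) + ∑ i ∈ Ioo 0 m, f (x i) * f (x (m - i)) = 0 := by
    intro m h1 h2
    have h3 := congrArg f (hxeq m h1 h2)
    simpa only [map_add, map_sum, map_mul, map_zero, hf_d] using h3
  have hdQ : H.d (∑ i ∈ Ioo 0 n, (y (n - i) * h i - h i * f (x (n - i))))
      = (∑ i ∈ Ioo 0 n, y i * y (n - i)) - ∑ i ∈ Ioo 0 n, f (x i) * f (x (n - i)) :=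
    d_Q H y (fun i => f (x i)) h n (fun i _ => hydeg i) hXdeg hhdeg
      (fun m h1 _ => hyeq m h1) hXeq hheq
  have hz_mem : (∑ i ∈ Ioo 0 n, x i * x (n - i)) ∈ G.grading (2 * (n : ℤ) + 2) := by
    refine AddSubgroup.sum_mem _ fun i hi => ?_
    rw [Finset.mem_Ioo] at hi
    refine G.mul_mem' (hxdeg i hi.2) (hxdeg (n - i) (by omega)) ?_
    have hcast : ((n - i : ℕ) : ℤ) = (n : ℤ) - i := by omega
    rw [hcast]; ring
  have hdz : G.d (∑ i ∈ Ioo 0 n, x i * x (n - i)) = 0 := d_obstruction G x n hxdeg hxeq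
  have hdyn : H.d (y n) = -∑ i ∈ Ioo 0 n, y i * y (n - i) :=
    eq_neg_of_add_eq_zero_left (hyeq n hn)
  have hQmem : (∑ i ∈ Ioo 0 n, (y (n - i) * h i - h i * f (x (n - i))))
      ∈ H.grading (2 * (n : ℤ) + 1) := by
    refine AddSubgroup.sum_mem _ fun i hi => ?_
    rw [Finset.mem_Ioo] at hi
    have hcast : ((n - i : ℕ) : ℤ) = (n : ℤ) - i := by omega
    refine sub_mem ?_ ?_
    · exact H.mul_mem' (hydeg (n - i)) (hhdeg i hi.2) (by rw [hcast]; ring)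
    · exact H.mul_mem' (hhdeg i hi.2) (hXdeg (n - i) (by omega)) (by rw [hcast]; ring)
  have hfz : f (-(∑ i ∈ Ioo 0 n, x i * x (n - i)))
      = H.d (y n + ∑ i ∈ Ioo 0 n, (y (n - i) * h i - h i * f (x (n - i)))) := by
    rw [map_add, hdyn, hdQ, map_neg, map_sum]
    simp only [map_mul]
    abel
  obtain ⟨w, hwmem, hww⟩ := hinj (2 * (n : ℤ) + 2) (-(∑ i ∈ Ioo 0 n, x i * x (n - i)))
    (neg_mem hz_mem) (by rw [map_neg, hdz, neg_zero])
    ⟨y n + ∑ i ∈ Ioo 0 n, (y (n - i) * h i - h i * f (x (n - i))),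
      H.mem_of_eq (by ring) (add_mem (hydeg n) hQmem), hfz⟩
  have hwmem' : w ∈ G.grading (2 * (n : ℤ) + 1) := G.mem_of_eq (by ring) hwmem
  have hdfw : H.d (f w) = -(∑ i ∈ Ioo 0 n, f (x i) * f (x (n - i))) := by
    rw [← hf_d, ← hww]
    simp [map_neg, map_sum, map_mul]
  have hdR : H.d (y n - f w
      + ∑ i ∈ Ioo 0 n, (y (n - i) * h i - h i * f (x (n - i)))) = 0 := by
    rw [map_add, map_sub, hdyn, hdfw, hdQ]
    abel
  have hRmem : (y n - f w + ∑ i ∈ Ioo 0 n, (y (n - i) * h i - h i * f (x (n - i))))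
      ∈ H.grading (2 * (n : ℤ) + 1) :=
    add_mem (sub_mem (hydeg n) (hf_deg _ _ hwmem')) hQmem
  obtain ⟨a, c, hamem, hda, hcmem, hac⟩ := hsurj (2 * (n : ℤ) + 1)
    (-(y n - f w + ∑ i ∈ Ioo 0 n, (y (n - i) * h i - h i * f (x (n - i)))))
    (neg_mem hRmem) (by rw [map_neg, hdR, neg_zero])
  have hac' : f a + (y n - f w
      + ∑ i ∈ Ioo 0 n, (y (n - i) * h i - h i * f (x (n - i)))) = H.d c := by
    rw [← hac]; abel
  refine ⟨(w - a, -c), sub_mem hwmem' hamem, neg_mem (H.mem_of_eq (by ring) hcmem), ?_, ?_⟩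
  · show G.d (w - a) + ∑ i ∈ Ioo 0 n, x i * x (n - i) = 0
    rw [map_sub, hda, sub_zero, ← hww]
    exact neg_add_cancel _
  · show y n - f (w - a) + H.d (-c)
      + ∑ i ∈ Ioo 0 n, (y (n - i) * h i - h i * f (x (n - i))) = 0
    rw [map_sub f, map_neg, ← hac']
    abel


lemma inj_step (G H : DGA) (f : G.A →+* H.A)
    (hf_deg : ∀ (m : ℤ) (a : G.A), a ∈ G.grading m → f a ∈ H.grading m)
    (hf_d : ∀ a : G.A, f (G.d a) = H.d (f a))
    (hsurj : ∀ (m : ℤ) (b : H.A), b ∈ H.grading m → H.d b = 0 →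
      ∃ a c, a ∈ G.grading m ∧ G.d a = 0 ∧ c ∈ H.grading (m - 1) ∧ f a - b = H.d c)
    (hinj : ∀ (m : ℤ) (a : G.A), a ∈ G.grading m → G.d a = 0 →
      (∃ c, c ∈ H.grading (m - 1) ∧ f a = H.d c) →
      ∃ c', c' ∈ G.grading (m - 1) ∧ a = G.d c')
    (x x' : ℕ → G.A) (hx : IsTwistingSeq G x) (hx' : IsTwistingSeq G x')
    (k : ℕ → H.A)
    (hk : IsHomotopy H (fun n => f (x n)) (fun n => f (x' n)) k)
    (n : ℕ) (hn : 1 ≤ n) (g : ℕ → G.A) (c : ℕ → H.A)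
    (hgdeg : ∀ i, i < n → g i ∈ G.grading (2 * (i : ℤ)))
    (hcdeg : ∀ i, 1 ≤ i → i < n → c i ∈ H.grading (2 * (i : ℤ) - 1))
    (hgeq : ∀ m, 1 ≤ m → m < n → x' m - x m + G.d (g m)
        + ∑ i ∈ Ioo 0 m, (x' (m - i) * g i - g i * x (m - i)) = 0)
    (hceq : ∀ m, 1 ≤ m → m < n → f (g m) - k m = H.d (c m)
        + ∑ j ∈ Ioo 0 m, (f (x' (m - j)) * c j + c j * f (x (m - j)))) :
    ∃ p : G.A × H.A, p.1 ∈ G.grading (2 * (n : ℤ)) ∧ p.2 ∈ H.grading (2 * (n : ℤ) - 1) ∧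
      (x' n - x n + G.d p.1
        + ∑ i ∈ Ioo 0 n, (x' (n - i) * g i - g i * x (n - i)) = 0) ∧
      f p.1 - k n = H.d p.2
        + ∑ j ∈ Ioo 0 n, (f (x' (n - j)) * c j + c j * f (x (n - j))) := by
  obtain ⟨hx0, hxdeg, hxeq⟩ := hx
  obtain ⟨hx'0, hx'deg, hx'eq⟩ := hx'
  obtain ⟨hk0, hkdeg, hkeq⟩ := hk
  have hXdeg : ∀ i, i < n → f (x i) ∈ H.grading (2 * (i : ℤ) + 1) :=
    fun i _ => hf_deg _ _ (hxdeg i)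
  have hX'deg : ∀ i, i < n → f (x' i) ∈ H.grading (2 * (i : ℤ) + 1) :=
    fun i _ => hf_deg _ _ (hx'deg i)
  have hXeq : ∀ m, 1 ≤ m → m < n →
      H.d (f (x m)) + ∑ i ∈ Ioo 0 m, f (x i) * f (x (m - i)) = 0 := by
    intro m h1 _
    have h3 := congrArg f (hxeq m h1)
    simpa only [map_add, map_sum, map_mul, map_zero, hf_d] using h3
  have hX'eq : ∀ m, 1 ≤ m → m < n →
      H.d (f (x' m)) + ∑ i ∈ Ioo 0 m, f (x' i) * f (x' (m - i)) = 0 := by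
    intro m h1 _
    have h3 := congrArg f (hx'eq m h1)
    simpa only [map_add, map_sum, map_mul, map_zero, hf_d] using h3
  -- the obstruction T in G
  have hdT : G.d (x' n - x n + ∑ i ∈ Ioo 0 n, (x' (n - i) * g i - g i * x (n - i))) = 0 :=
    d_hobstruction G x x' g n hn (fun i _ => hxdeg i) (fun i _ => hx'deg i) hgdeg
      (fun m h1 _ => hxeq m h1) (fun m h1 _ => hx'eq m h1) hgeq
  have hTmem : (x' n - x n + ∑ i ∈ Ioo 0 n, (x' (n - i) * g i - g i * x (n - i)))
      ∈ G.grading (2 * (n : ℤ) + 1) := by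
    refine add_mem (sub_mem (hx'deg n) (hxdeg n)) (AddSubgroup.sum_mem _ fun i hi => ?_)
    rw [Finset.mem_Ioo] at hi
    have hcast : ((n - i : ℕ) : ℤ) = (n : ℤ) - i := by omega
    refine sub_mem ?_ ?_
    · exact G.mul_mem' (hx'deg (n - i)) (hgdeg i hi.2) (by rw [hcast]; ring)
    · exact G.mul_mem' (hgdeg i hi.2) (hxdeg (n - i)) (by rw [hcast]; ring)
  -- W in H and its differential
  have hdW : H.d (∑ i ∈ Ioo 0 n, (f (x' (n - i)) * c i + c i * f (x (n - i))))
      = -∑ i ∈ Ioo 0 n, (f (x' (n - i)) * (f (g i) - k i) - (f (g i) - k i) * f (x (n - i))) :=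
    d_W H (fun i => f (x i)) (fun i => f (x' i)) c (fun i => f (g i) - k i) n
      hXdeg hX'deg hcdeg hXeq hX'eq hceq
  have hWmem : (∑ i ∈ Ioo 0 n, (f (x' (n - i)) * c i + c i * f (x (n - i))))
      ∈ H.grading (2 * (n : ℤ)) := by
    refine AddSubgroup.sum_mem _ fun i hi => ?_
    rw [Finset.mem_Ioo] at hi
    have hcast : ((n - i : ℕ) : ℤ) = (n : ℤ) - i := by omega
    refine add_mem ?_ ?_
    · exact H.mul_mem' (hX'deg (n - i) (by omega)) (hcdeg i hi.1 hi.2) (by rw [hcast]; ring)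
    · exact H.mul_mem' (hcdeg i hi.1 hi.2) (hXdeg (n - i) (by omega)) (by rw [hcast]; ring)
  have hkn := hkeq n hn
  simp only at hkn
  have hdkn : H.d (k n) = f (x n) - f (x' n)
      - ∑ i ∈ Ioo 0 n, (f (x' (n - i)) * k i - k i * f (x (n - i))) := shuffle hkn
  -- f T = d (-(k n) - W)
  have hterm : ∀ i ∈ Ioo 0 n,
      (f (x' (n - i)) * f (g i) - f (g i) * f (x (n - i)))
        = (f (x' (n - i)) * (f (g i) - k i) - (f (g i) - k i) * f (x (n - i)))
          + (f (x' (n - i)) * k i - k i * f (x (n - i))) := by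
    intro i _
    simp only [mul_sub, sub_mul]
    abel
  have hfT : f (x' n - x n + ∑ i ∈ Ioo 0 n, (x' (n - i) * g i - g i * x (n - i)))
      = H.d (-(k n) - ∑ i ∈ Ioo 0 n, (f (x' (n - i)) * c i + c i * f (x (n - i)))) := by
    rw [map_add, map_sub f, map_sum]
    simp only [map_sub, map_mul, map_neg]
    rw [hdW, hdkn, Finset.sum_congr rfl hterm, Finset.sum_add_distrib]
    abel
  obtain ⟨g0, hg0mem, hg0⟩ := hinj (2 * (n : ℤ) + 1)
    (x' n - x n + ∑ i ∈ Ioo 0 n, (x' (n - i) * g i - g i * x (n - i))) hTmem hdT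
    ⟨-(k n) - ∑ i ∈ Ioo 0 n, (f (x' (n - i)) * c i + c i * f (x (n - i))),
      H.mem_of_eq (by ring) (sub_mem (neg_mem (hkdeg n)) hWmem), hfT⟩
  have hg0mem' : g0 ∈ G.grading (2 * (n : ℤ)) := G.mem_of_eq (by ring) hg0mem
  -- N := f (-g0) - k n - W ; d N = 0
  have hdfg0 : H.d (f g0)
      = f (x' n - x n + ∑ i ∈ Ioo 0 n, (x' (n - i) * g i - g i * x (n - i))) := by
    rw [← hf_d, ← hg0]
  have hdN : H.d (f (-g0) - k n
      - ∑ i ∈ Ioo 0 n, (f (x' (n - i)) * c i + c i * f (x (n - i)))) = 0 := by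
    rw [map_sub, map_sub, map_neg f, map_neg H.d, hdfg0, hfT, map_sub, map_neg, hdW]
    abel
  have hNmem : (f (-g0) - k n
      - ∑ i ∈ Ioo 0 n, (f (x' (n - i)) * c i + c i * f (x (n - i))))
      ∈ H.grading (2 * (n : ℤ)) :=
    sub_mem (sub_mem (hf_deg _ _ (neg_mem hg0mem')) (hkdeg n)) hWmem
  obtain ⟨a, c0, hamem, hda, hc0mem, hac⟩ := hsurj (2 * (n : ℤ))
    (f (-g0) - k n - ∑ i ∈ Ioo 0 n, (f (x' (n - i)) * c i + c i * f (x (n - i))))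
    hNmem hdN
  refine ⟨(-g0 - a, -c0), sub_mem (neg_mem hg0mem') hamem, neg_mem hc0mem, ?_, ?_⟩
  · show x' n - x n + G.d (-g0 - a)
      + ∑ i ∈ Ioo 0 n, (x' (n - i) * g i - g i * x (n - i)) = 0
    rw [map_sub, map_neg, hda, sub_zero, ← hg0]
    abel
  · show f (-g0 - a) - k n = H.d (-c0)
      + ∑ j ∈ Ioo 0 n, (f (x' (n - j)) * c j + c j * f (x (n - j)))
    rw [map_sub f, map_neg H.d]
    have : H.d c0 = f a - (f (-g0) - k n
        - ∑ i ∈ Ioo 0 n, (f (x' (n - i)) * c i + c i * f (x (n - i)))) := hac.symm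
    rw [this]
    abel


/-- Let `f : A → B` be a homomorphism of dg-algebras (a ring
homomorphism preserving degrees and commuting with the differentials) inducing an
isomorphism on cohomology (stated degreewise: cocycles of `B` are, up to coboundaries,
images of cocycles of `A`; and cocycles of `A` whose image is exact are exact).  Then the
induced map on homotopy classes of twisting sequences `ts(A) → ts(B)` is a bijection:
every twisting sequence of `B` is homotopic to the image of a twisting sequence of `A`,
and twisting sequences of `A` with homotopic images are homotopic. -/
theorem quasiIso_twisting_bijection (G H : DGA) (f : G.A →+* H.A)
    (hf_deg : ∀ (m : ℤ) (a : G.A), a ∈ G.grading m → f a ∈ H.grading m)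
    (hf_d : ∀ a : G.A, f (G.d a) = H.d (f a))
    (hsurj : ∀ (m : ℤ) (b : H.A), b ∈ H.grading m → H.d b = 0 →
      ∃ a c, a ∈ G.grading m ∧ G.d a = 0 ∧ c ∈ H.grading (m - 1) ∧ f a - b = H.d c)
    (hinj : ∀ (m : ℤ) (a : G.A), a ∈ G.grading m → G.d a = 0 →
      (∃ c, c ∈ H.grading (m - 1) ∧ f a = H.d c) →
      ∃ c', c' ∈ G.grading (m - 1) ∧ a = G.d c') :
    (∀ y : ℕ → H.A, IsTwistingSeq H y →
        ∃ x : ℕ → G.A, IsTwistingSeq G x ∧ Homotopic H (fun n => f (x n)) y) ∧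
      (∀ x x' : ℕ → G.A, IsTwistingSeq G x → IsTwistingSeq G x' →
        Homotopic H (fun n => f (x n)) (fun n => f (x' n)) → Homotopic G x x') := by
  constructor
  · -- surjectivity
    intro y hy
    have hcongr : ∀ (n : ℕ) (prev prev' : ℕ → G.A × H.A) (p : G.A × H.A), (∀ i, i < n → prev i = prev' i) →
        (p.1 ∈ G.grading (2 * (n : ℤ) + 1) ∧ p.2 ∈ H.grading (2 * (n : ℤ)) ∧
          (n = 0 → p = 0) ∧ (1 ≤ n →
            (G.d p.1 + ∑ i ∈ Ioo 0 n, (prev i).1 * (prev (n - i)).1 = 0 ∧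
              y n - f p.1 + H.d p.2 + ∑ i ∈ Ioo 0 n,
                (y (n - i) * (prev i).2 - (prev i).2 * f ((prev (n - i)).1)) = 0))) →
        (p.1 ∈ G.grading (2 * (n : ℤ) + 1) ∧ p.2 ∈ H.grading (2 * (n : ℤ)) ∧
          (n = 0 → p = 0) ∧ (1 ≤ n →
            (G.d p.1 + ∑ i ∈ Ioo 0 n, (prev' i).1 * (prev' (n - i)).1 = 0 ∧
              y n - f p.1 + H.d p.2 + ∑ i ∈ Ioo 0 n,
                (y (n - i) * (prev' i).2 - (prev' i).2 * f ((prev' (n - i)).1)) = 0))) := by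
      intro n prev prev' p hpp hsp
      obtain ⟨h1, h2, h3, h4⟩ := hsp
      refine ⟨h1, h2, h3, fun hn => ?_⟩
      obtain ⟨h5, h6⟩ := h4 hn
      have e1 : ∀ i ∈ Ioo 0 n, (prev' i).1 * (prev' (n - i)).1
          = (prev i).1 * (prev (n - i)).1 := by
        intro i hi; rw [Finset.mem_Ioo] at hi
        rw [hpp i (by omega), hpp (n - i) (by omega)]
      have e2 : ∀ i ∈ Ioo 0 n, (y (n - i) * (prev' i).2 - (prev' i).2 * f ((prev' (n - i)).1))
          = (y (n - i) * (prev i).2 - (prev i).2 * f ((prev (n - i)).1)) := by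
        intro i hi; rw [Finset.mem_Ioo] at hi
        rw [hpp i (by omega), hpp (n - i) (by omega)]
      rw [Finset.sum_congr rfl e1, Finset.sum_congr rfl e2]
      exact ⟨h5, h6⟩
    have hex : ∀ (n : ℕ) (s : ℕ → G.A × H.A),
        (∀ m, m < n → ((s m).1 ∈ G.grading (2 * (m : ℤ) + 1) ∧ (s m).2 ∈ H.grading (2 * (m : ℤ)) ∧
          (m = 0 → s m = 0) ∧ (1 ≤ m →
            (G.d (s m).1 + ∑ i ∈ Ioo 0 m, (s i).1 * (s (m - i)).1 = 0 ∧
              y m - f (s m).1 + H.d (s m).2 + ∑ i ∈ Ioo 0 m,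
                (y (m - i) * (s i).2 - (s i).2 * f ((s (m - i)).1)) = 0)))) →
        ∃ p : G.A × H.A, (p.1 ∈ G.grading (2 * (n : ℤ) + 1) ∧ p.2 ∈ H.grading (2 * (n : ℤ)) ∧
          (n = 0 → p = 0) ∧ (1 ≤ n →
            (G.d p.1 + ∑ i ∈ Ioo 0 n, (s i).1 * (s (n - i)).1 = 0 ∧
              y n - f p.1 + H.d p.2 + ∑ i ∈ Ioo 0 n,
                (y (n - i) * (s i).2 - (s i).2 * f ((s (n - i)).1)) = 0))) := by
      intro n s hm
      rcases Nat.eq_zero_or_pos n with hn0 | hn1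
      · subst hn0
        exact ⟨0, zero_mem _, zero_mem _, fun _ => rfl, fun hh => absurd hh (by omega)⟩
      · obtain ⟨p, hp1, hp2, hp3, hp4⟩ := surj_step G H f hf_deg hf_d hsurj hinj y hy n hn1
          (fun i => (s i).1) (fun i => (s i).2)
          (fun i hi => (hm i hi).1)
          (fun i hi => (hm i hi).2.1)
          (fun m h1 h2 => ((hm m h2).2.2.2 h1).1)
          (fun m h1 h2 => ((hm m h2).2.2.2 h1).2)
        exact ⟨p, hp1, hp2, fun h0 => absurd h0 (by omega), fun _ => ⟨hp3, hp4⟩⟩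
    obtain ⟨s, hs⟩ := main_rec (α := G.A × H.A)
      (fun n prev p =>
        p.1 ∈ G.grading (2 * (n : ℤ) + 1) ∧ p.2 ∈ H.grading (2 * (n : ℤ)) ∧
          (n = 0 → p = 0) ∧ (1 ≤ n →
            (G.d p.1 + ∑ i ∈ Ioo 0 n, (prev i).1 * (prev (n - i)).1 = 0 ∧
              y n - f p.1 + H.d p.2 + ∑ i ∈ Ioo 0 n,
                (y (n - i) * (prev i).2 - (prev i).2 * f ((prev (n - i)).1)) = 0)))
      0 hcongr hex
    have h00 : s 0 = 0 := (hs 0).2.2.1 rfl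
    refine ⟨fun n => (s n).1,
      ⟨by simp [h00], fun n => (hs n).1, fun n hn => ((hs n).2.2.2 hn).1⟩,
      fun n => (s n).2,
      by simp [h00], fun n => (hs n).2.1, fun n hn => ((hs n).2.2.2 hn).2⟩
  · -- injectivity
    intro x x' hx hx' ⟨k, hk⟩
    have hcongr : ∀ (n : ℕ) (prev prev' : ℕ → G.A × H.A) (p : G.A × H.A), (∀ i, i < n → prev i = prev' i) →
        (p.1 ∈ G.grading (2 * (n : ℤ)) ∧ p.2 ∈ H.grading (2 * (n : ℤ) - 1) ∧
          (n = 0 → p = 0) ∧ (1 ≤ n →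
            ((x' n - x n + G.d p.1 + ∑ i ∈ Ioo 0 n,
                (x' (n - i) * (prev i).1 - (prev i).1 * x (n - i)) = 0) ∧
              f p.1 - k n = H.d p.2 + ∑ j ∈ Ioo 0 n,
                (f (x' (n - j)) * (prev j).2 + (prev j).2 * f (x (n - j)))))) →
        (p.1 ∈ G.grading (2 * (n : ℤ)) ∧ p.2 ∈ H.grading (2 * (n : ℤ) - 1) ∧
          (n = 0 → p = 0) ∧ (1 ≤ n →
            ((x' n - x n + G.d p.1 + ∑ i ∈ Ioo 0 n,
                (x' (n - i) * (prev' i).1 - (prev' i).1 * x (n - i)) = 0) ∧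
              f p.1 - k n = H.d p.2 + ∑ j ∈ Ioo 0 n,
                (f (x' (n - j)) * (prev' j).2 + (prev' j).2 * f (x (n - j)))))) := by
      intro n prev prev' p hpp hsp
      obtain ⟨h1, h2, h3, h4⟩ := hsp
      refine ⟨h1, h2, h3, fun hn => ?_⟩
      obtain ⟨h5, h6⟩ := h4 hn
      have e1 : ∀ i ∈ Ioo 0 n, (x' (n - i) * (prev' i).1 - (prev' i).1 * x (n - i))
          = (x' (n - i) * (prev i).1 - (prev i).1 * x (n - i)) := by
        intro i hi; rw [Finset.mem_Ioo] at hi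
        rw [hpp i (by omega)]
      have e2 : ∀ j ∈ Ioo 0 n, (f (x' (n - j)) * (prev' j).2 + (prev' j).2 * f (x (n - j)))
          = (f (x' (n - j)) * (prev j).2 + (prev j).2 * f (x (n - j))) := by
        intro j hj; rw [Finset.mem_Ioo] at hj
        rw [hpp j (by omega)]
      rw [Finset.sum_congr rfl e1, Finset.sum_congr rfl e2]
      exact ⟨h5, h6⟩
    have hex : ∀ (n : ℕ) (s : ℕ → G.A × H.A),
        (∀ m, m < n → ((s m).1 ∈ G.grading (2 * (m : ℤ)) ∧
          (s m).2 ∈ H.grading (2 * (m : ℤ) - 1) ∧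
          (m = 0 → s m = 0) ∧ (1 ≤ m →
            ((x' m - x m + G.d (s m).1 + ∑ i ∈ Ioo 0 m,
                (x' (m - i) * (s i).1 - (s i).1 * x (m - i)) = 0) ∧
              f (s m).1 - k m = H.d (s m).2 + ∑ j ∈ Ioo 0 m,
                (f (x' (m - j)) * (s j).2 + (s j).2 * f (x (m - j))))))) →
        ∃ p : G.A × H.A, (p.1 ∈ G.grading (2 * (n : ℤ)) ∧
          p.2 ∈ H.grading (2 * (n : ℤ) - 1) ∧
          (n = 0 → p = 0) ∧ (1 ≤ n →
            ((x' n - x n + G.d p.1 + ∑ i ∈ Ioo 0 n,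
                (x' (n - i) * (s i).1 - (s i).1 * x (n - i)) = 0) ∧
              f p.1 - k n = H.d p.2 + ∑ j ∈ Ioo 0 n,
                (f (x' (n - j)) * (s j).2 + (s j).2 * f (x (n - j)))))) := by
      intro n s hm
      rcases Nat.eq_zero_or_pos n with hn0 | hn1
      · subst hn0
        exact ⟨0, zero_mem _, zero_mem _, fun _ => rfl, fun hh => absurd hh (by omega)⟩
      · obtain ⟨p, hp1, hp2, hp3, hp4⟩ := inj_step G H f hf_deg hf_d hsurj hinj x x' hx hx'
          k hk n hn1 (fun i => (s i).1) (fun i => (s i).2)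
          (fun i hi => (hm i hi).1)
          (fun i _ hi => (hm i hi).2.1)
          (fun m h1 h2 => ((hm m h2).2.2.2 h1).1)
          (fun m h1 h2 => ((hm m h2).2.2.2 h1).2)
        exact ⟨p, hp1, hp2, fun h0 => absurd h0 (by omega), fun _ => ⟨hp3, hp4⟩⟩
    obtain ⟨s, hs⟩ := main_rec (α := G.A × H.A)
      (fun n prev p =>
        p.1 ∈ G.grading (2 * (n : ℤ)) ∧ p.2 ∈ H.grading (2 * (n : ℤ) - 1) ∧
          (n = 0 → p = 0) ∧ (1 ≤ n →
            ((x' n - x n + G.d p.1 + ∑ i ∈ Ioo 0 n,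
                (x' (n - i) * (prev i).1 - (prev i).1 * x (n - i)) = 0) ∧
              f p.1 - k n = H.d p.2 + ∑ j ∈ Ioo 0 n,
                (f (x' (n - j)) * (prev j).2 + (prev j).2 * f (x (n - j))))))
      0 hcongr hex
    have h00 : s 0 = 0 := (hs 0).2.2.1 rfl
    exact ⟨fun n => (s n).1,
      by simp [h00], fun n => (hs n).1, fun n hn => ((hs n).2.2.2 hn).1⟩
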